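/- Let A be a semiprime unital ring and L ⊆ A a left ideal. Then L is Fredholm if and only if there exist n ∈ ℕ and idempotents p₁, …, pₙ ∈ A such that each left ideal A pⱼ is a maximal left ideal and L = ⋂ⱼ A pⱼ. -/

import Mathlib

open MulOpposite Submodule

/-- The length of a module: the supremum of lengths of chains of submodules. -/
noncomputable def mlen (R M : Type*) [Ring R] [AddCommGroup M] [Module R M] : ℕ∞ :=
  WithBot.unbotD 0 (Order.krullDim (Submodule R M))

/-- A ring is semiprime if it has no nonzero nilpotent (two-sided) ideals;
equivalently, `a A a = 0` implies `a = 0`. -/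
def IsSemiprimeRing (A : Type*) [Ring A] : Prop :=
  ∀ a : A, (∀ x : A, a * x * a = 0) → a = 0

/-- The (left) socle of a ring: the sum of all minimal left ideals. -/
noncomputable def socle (A : Type*) [Ring A] : Submodule A A :=
  sSup {m : Submodule A A | IsAtom m}

/-- An element is Fredholm if its image in `A/soc(A)` is invertible. -/
def IsFredholmElem {A : Type*} [Ring A] (a : A) : Prop :=
  ∃ b : A, a * b - 1 ∈ socle A ∧ b * a - 1 ∈ socle A

/-- A left ideal is Fredholm if it contains a Fredholm element. -/
def IsFredholmLeftIdeal {A : Type*} [Ring A] (L : Submodule A A) : Prop :=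
  ∃ a ∈ L, IsFredholmElem a

/-- The right annihilator of a set, as a right ideal (`Aᵐᵒᵖ`-submodule of `A`). -/
def rAnn {A : Type*} [Ring A] (S : Set A) : Submodule Aᵐᵒᵖ A where
  carrier := {a | ∀ s ∈ S, s * a = 0}
  add_mem' := by intro x y hx hy s hs; rw [Set.mem_setOf_eq] at *; rw [mul_add, hx s hs, hy s hs, add_zero]
  zero_mem' := by intro s _; exact mul_zero s
  smul_mem' := by
    intro c x hx s hs
    show s * (c • x) = 0
    rw [MulOpposite.smul_eq_mul_unop, ← mul_assoc, hx s hs, zero_mul]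

/-- The left annihilator of a set, as a left ideal. -/
def lAnn {A : Type*} [Ring A] (S : Set A) : Submodule A A where
  carrier := {a | ∀ s ∈ S, a * s = 0}
  add_mem' := by intro x y hx hy s hs; rw [Set.mem_setOf_eq] at *; rw [add_mul, hx s hs, hy s hs, add_zero]
  zero_mem' := by intro s _; exact zero_mul s
  smul_mem' := by
    intro c x hx s hs
    show c * x * s = 0
    rw [mul_assoc, hx s hs, mul_zero]


section Aux
variable {A : Type*} [Ring A]

/-- Right multiplication as an `A`-linear endomorphism of `A`. -/
def rmulL (a : A) : A →ₗ[A] A where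
  toFun x := x * a
  map_add' x y := add_mul x y a
  map_smul' r x := mul_assoc r x a

@[simp] lemma rmulL_apply (a x : A) : rmulL a x = x * a := rfl

lemma map_atom_bot_or_atom (f : A →ₗ[A] A) {I : Submodule A A} (hI : IsAtom I) :
    I.map f = ⊥ ∨ IsAtom (I.map f) := by
  by_cases h : I.map f = ⊥
  · exact Or.inl h
  · refine Or.inr ⟨h, fun J hJ => ?_⟩
    have hK : I ⊓ comap f J = ⊥ := by
      apply hI.2
      refine lt_of_le_of_ne inf_le_left fun he => ?_
      have : I ≤ comap f J := by rw [← he]; exact inf_le_right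
      exact absurd (map_le_iff_le_comap.2 this) (not_le_of_gt hJ)
    rw [eq_bot_iff]
    rintro x hx
    obtain ⟨y, hy, rfl⟩ := hJ.le hx
    have : y ∈ I ⊓ comap f J := ⟨hy, hx⟩
    rw [hK] at this
    simp only [Submodule.mem_bot] at this
    subst this
    simp

lemma atom_le_socle {I : Submodule A A} (hI : IsAtom I) : I ≤ socle A := le_sSup hI

lemma socle_mul_mem {s : A} (hs : s ∈ socle A) (a : A) : s * a ∈ socle A := by
  have heq : (socle A) = ⨆ I : Submodule A A, ⨆ _ : IsAtom I, I := by
    rw [socle, sSup_eq_iSup]; rfl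
  have h : (socle A).map (rmulL a) ≤ socle A := by
    conv_lhs => rw [heq]
    rw [Submodule.map_iSup]
    refine iSup_le fun I => ?_
    rw [Submodule.map_iSup]
    refine iSup_le fun hI => ?_
    rcases map_atom_bot_or_atom (rmulL a) hI with h | h
    · rw [h]; exact bot_le
    · exact atom_le_socle h
  exact h ⟨s, hs, rfl⟩

end Aux

section Brauer
variable {A : Type*} [Ring A]

/-- Brauer's lemma (left version): a minimal left ideal of a semiprime ring has a
right unit element `e` (idempotent). -/
lemma left_brauer (hA : IsSemiprimeRing A) {I : Submodule A A} (hI : IsAtom I) :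
    ∃ e ∈ I, e ≠ 0 ∧ ∀ x ∈ I, x * e = x := by
  obtain ⟨w, hwI, hw0⟩ := I.ne_bot_iff.1 hI.1
  -- find u, y in I with y * u ≠ 0
  have hyu : ∃ u ∈ I, ∃ y ∈ I, y * u ≠ 0 := by
    by_contra hcon
    push_neg at hcon
    apply hw0
    apply hA w
    intro x
    have hxw : x * w ∈ I := by
      have := I.smul_mem x hwI
      simpa [smul_eq_mul] using this
    have := hcon (x * w) hxw w hwI
    rwa [← mul_assoc] at this
  obtain ⟨u, huI, y, hyI, hyu0⟩ := hyu
  have hu0 : u ≠ 0 := fun h => hyu0 (by rw [h, mul_zero])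
  -- K = I * u as a submodule; K = I
  set K : Submodule A A := I.map (rmulL u) with hK
  have hKI : K ≤ I := by
    rintro _ ⟨x, hx, rfl⟩
    simpa [smul_eq_mul] using I.smul_mem x huI
  have hKb : K ≠ ⊥ := by
    intro h
    apply hyu0
    have : y * u ∈ K := ⟨y, hyI, rfl⟩
    rw [h] at this
    simpa using this
  have hKeq : K = I := by
    rcases eq_or_lt_of_le hKI with h | h
    · exact h
    · exact absurd (hI.2 _ h) hKb
  have huK : u ∈ K := hKeq ▸ huI
  obtain ⟨e, heI, heu⟩ := huK
  simp only [rmulL_apply] at heu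
  have he0 : e ≠ 0 := fun h => hu0 (by rw [← heu, h, zero_mul])
  refine ⟨e, heI, he0, fun x hx => ?_⟩
  -- J = I ⊓ lAnn {u} = ⊥
  have hJ : I ⊓ lAnn {u} = ⊥ := by
    apply hI.2
    refine lt_of_le_of_ne inf_le_left fun hcon => ?_
    have : e ∈ I ⊓ lAnn {u} := by rw [hcon]; exact heI
    have := this.2 u rfl
    rw [heu] at this
    exact hu0 this
  have hmem : x * e - x ∈ I ⊓ lAnn {u} := by
    constructor
    · exact sub_mem (by simpa [smul_eq_mul] using I.smul_mem x heI) hx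
    · intro s hs
      rcases hs with rfl
      rw [sub_mul, mul_assoc, heu, sub_self]
  rw [hJ] at hmem
  rw [Submodule.mem_bot] at hmem
  exact sub_eq_zero.1 hmem

/-- If `p` is idempotent and `Ap` is a maximal left ideal, then `A(1-p)` is a minimal
left ideal. -/
lemma atom_span_one_sub {p : A} (hp : p * p = p) (hc : IsCoatom (span A {p})) :
    IsAtom (span A {1 - p}) := by
  have hep : (1 - p) * p = 0 := by rw [sub_mul, one_mul, hp, sub_self]
  have hpe : p * (1 - p) = 0 := by rw [mul_sub, mul_one, hp, sub_self]
  have hee : (1 - p) * (1 - p) = 1 - p := by rw [mul_sub, mul_one, hep, sub_zero]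
  constructor
  · intro h0
    rw [span_singleton_eq_bot] at h0
    apply hc.1
    have hp1 : p = 1 := by rw [← sub_eq_zero]; rw [← neg_sub]; rw [h0, neg_zero]
    rw [eq_top_iff]
    intro x _
    exact mem_span_singleton.2 ⟨x, by rw [hp1, smul_eq_mul, mul_one]⟩
  · intro J hJ
    by_contra hJb
    obtain ⟨y, hyJ, hy0⟩ := J.ne_bot_iff.1 hJb
    obtain ⟨u, huy⟩ := mem_span_singleton.1 (hJ.le hyJ)
    rw [smul_eq_mul] at huy
    -- span{p} ⊔ J = ⊤
    have hnle : ¬ J ≤ span A {p} := by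
      intro hle
      obtain ⟨d, hd⟩ := mem_span_singleton.1 (hle hyJ)
      rw [smul_eq_mul] at hd
      apply hy0
      have h1 : y * p = y := by rw [← hd, mul_assoc, hp]
      have h2 : y * p = 0 := by rw [← huy, mul_assoc, hep, mul_zero]
      rw [← h1, h2]
    have hsup : span A {p} ⊔ J = ⊤ := by
      apply hc.2
      refine lt_of_le_of_ne le_sup_left fun hcon => ?_
      exact hnle (le_sup_right.trans hcon.ge)
    -- 1 - p ∈ span{p} ⊔ J
    have hmem : (1 - p) ∈ span A {p} ⊔ J := by rw [hsup]; trivial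
    obtain ⟨m, hm, j, hj, hmj⟩ := Submodule.mem_sup.1 hmem
    obtain ⟨d, hd⟩ := mem_span_singleton.1 hm
    rw [smul_eq_mul] at hd
    obtain ⟨v, hv⟩ := mem_span_singleton.1 (hJ.le hj)
    rw [smul_eq_mul] at hv
    -- 1 - p = j
    have hje : j * (1 - p) = j := by rw [← hv, mul_assoc, hee]
    have key : 1 - p = j := by
      have : (m + j) * (1 - p) = 1 - p := by rw [hmj, hee]
      rw [add_mul, ← hd, mul_assoc, hpe, mul_zero, zero_add, hje] at this
      exact this.symm
    have : span A {1 - p} ≤ J := by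
      rw [span_le, Set.singleton_subset_iff]
      rw [key]; exact hj
    exact absurd this (not_le_of_gt hJ)

end Brauer

section Division
variable {A : Type*} [Ring A]

/-- In `eAe` (for `Ae` a minimal left ideal), nonzero elements have left inverses. -/
lemma eAe_left_inv (hI : IsAtom (span A {e})) (he : e * e = e) {c : A}
    (hc : e * c * e ≠ 0) : ∃ d : A, (e * d * e) * (e * c * e) = e := by
  set u := e * c * e with hu
  have huI : u ∈ span A {e} := mem_span_singleton.2 ⟨e * c, rfl⟩
  have hu0 : u ≠ 0 := hc
  have hsp : span A {u} = span A {e} := by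
    have h1 : span A {u} ≤ span A {e} := by rwa [span_le, Set.singleton_subset_iff]
    rcases eq_or_lt_of_le h1 with h | h
    · exact h
    · exact absurd (span_singleton_eq_bot.1 (hI.2 _ h)) hu0
  have heu : e ∈ span A {u} := hsp ▸ mem_span_singleton_self e
  obtain ⟨d, hd⟩ := mem_span_singleton.1 heu
  rw [smul_eq_mul] at hd
  refine ⟨d, ?_⟩
  have he2 : ∀ x : A, e * (e * x) = e * x := fun x => by rw [← mul_assoc, he]
  calc (e * d * e) * (e * c * e) = e * (d * (e * (e * (c * e)))) := by
        simp only [mul_assoc]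
    _ = e * (d * (e * (c * e))) := by rw [he2]
    _ = e * (d * u) := by rw [hu]; simp only [mul_assoc]
    _ = e := by rw [hd, he]

/-- ... and two-sided inverses. -/
lemma eAe_right_inv (hI : IsAtom (span A {e})) (he : e * e = e) {c : A}
    (hc : e * c * e ≠ 0) : ∃ d : A, (e * c * e) * (e * d * e) = e := by
  obtain ⟨d₁, hd₁⟩ := eAe_left_inv hI he hc
  have he0 : e ≠ 0 := by
    intro h
    apply hc; rw [h, zero_mul, zero_mul]
  have hv0 : e * d₁ * e ≠ 0 := by
    intro h; rw [h, zero_mul] at hd₁; exact he0 hd₁.symm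
  obtain ⟨d₂, hd₂⟩ := eAe_left_inv hI he hv0
  -- u = v₂
  have hue : e * c * e * e = e * c * e := by rw [mul_assoc, mul_assoc, he, ← mul_assoc]
  have heu : e * (e * c * e) = e * c * e := by
    rw [show e * (e * c * e) = e * e * c * e by simp only [mul_assoc], he]
  have hv₂e : e * d₂ * e * e = e * d₂ * e := by rw [mul_assoc, mul_assoc, he, ← mul_assoc]
  have key : e * c * e = e * d₂ * e := by
    calc e * c * e = e * (e * c * e) := heu.symm
      _ = (e * d₂ * e * (e * d₁ * e)) * (e * c * e) := by rw [hd₂]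
      _ = e * d₂ * e * ((e * d₁ * e) * (e * c * e)) := by simp only [mul_assoc]
      _ = e * d₂ * e * e := by rw [hd₁]
      _ = e * d₂ * e := hv₂e
  exact ⟨d₁, by rw [key, hd₂]⟩

/-- Minimality gives: every nonzero `e * a` divides `e` on the right. -/
lemma min_right_div (hA : IsSemiprimeRing A) (hI : IsAtom (span A {e}))
    (he : e * e = e) : ∀ a : A, e * a ≠ 0 → ∃ z, e * a * z = e := by
  intro a ha
  have hx : ∃ x, (e * a) * x * (e * a) ≠ 0 := by
    by_contra hcon
    push_neg at hcon
    exact ha (hA _ hcon)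
  obtain ⟨x, hx⟩ := hx
  have hu0 : e * (a * x) * e ≠ 0 := by
    intro h
    apply hx
    calc (e * a) * x * (e * a) = (e * (a * x) * e) * a := by simp only [mul_assoc]
      _ = 0 := by rw [h, zero_mul]
  obtain ⟨d, hd⟩ := eAe_right_inv hI he hu0
  have he2 : ∀ x : A, e * (e * x) = e * x := fun x => by rw [← mul_assoc, he]
  refine ⟨x * (e * d * e), ?_⟩
  calc e * a * (x * (e * d * e)) = e * (a * (x * (e * (d * e)))) := by
        simp only [mul_assoc]
    _ = e * (a * (x * (e * (e * (d * e))))) := by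
        conv_lhs => rw [← he2 (d * e)]
    _ = e := by simpa only [mul_assoc] using hd

/-- Brauer's lemma, right-handed elementwise version:  a "minimal" principal right ideal
`f'A` of a semiprime ring has a left unit. -/
lemma right_brauer (hA : IsSemiprimeRing A) {f : A} (hf : f ≠ 0)
    (hP : ∀ a, f * a ≠ 0 → ∃ z, f * a * z = f) :
    ∃ a₀ : A, f * a₀ ≠ 0 ∧ ∀ a, (f * a₀) * (f * a) = f * a := by
  -- find b, r with (f*b)*(f*r) ≠ 0
  have hbr : ∃ b r, (f * b) * (f * r) ≠ 0 := by
    by_contra hcon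
    push_neg at hcon
    apply hf
    apply hA f
    intro x
    have := hcon x 1
    rwa [mul_one] at this
  obtain ⟨b, r, hbr⟩ := hbr
  set u := f * b with hu
  have hy : f * (b * (f * r)) ≠ 0 := by rwa [← mul_assoc]
  obtain ⟨z, hz⟩ := hP _ hy
  -- h = u * ((f*r) * (z*b)) ... a₀ := r*(z*b) ... h = f*(b*(f*(r*(z*b))))? 
  set a₀ := r * (z * b) with ha₀
  have hfa₀ : f * a₀ = (f * r) * (z * b) := by simp only [ha₀, mul_assoc]
  have huh : u * (f * a₀) = u := by
    calc u * (f * a₀) = (f * (b * (f * r)) * z) * b := by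
          rw [hfa₀, hu]; simp only [mul_assoc]
      _ = f * b := by rw [hz]
  have hu0 : u ≠ 0 := by
    intro h; rw [h, zero_mul] at hbr; exact hbr rfl
  have hann : ∀ a : A, u * (f * a) = 0 → f * a = 0 := by
    intro a h
    by_contra hw
    obtain ⟨z', hz'⟩ := hP a hw
    have huf : u * f = 0 := by
      calc u * f = u * (f * a * z') := by rw [hz']
        _ = (u * (f * a)) * z' := by simp only [mul_assoc]
        _ = 0 := by rw [h, zero_mul]
    apply hbr
    calc (f * b) * (f * r) = (u * f) * r := by rw [hu]; simp only [mul_assoc]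
      _ = 0 := by rw [huf, zero_mul]
  have ha₀0 : f * a₀ ≠ 0 := by
    intro h
    rw [h, mul_zero] at huh
    exact hu0 huh.symm
  refine ⟨a₀, ha₀0, fun a => ?_⟩
  have hsub : (f * a₀) * (f * a) - f * a = f * (a₀ * (f * a) - a) := by
    rw [mul_sub]; simp only [mul_assoc]
  have h0 : u * ((f * a₀) * (f * a) - f * a) = 0 := by
    rw [mul_sub, ← mul_assoc, huh, sub_self]
  rw [hsub] at h0
  have := hann _ h0
  rw [← hsub] at this
  exact sub_eq_zero.1 this

end Division

section BackwardKey
variable {A : Type*} [Ring A]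

lemma idem_glue {g h : A} (hgg : g * g = g) (hhh : h * h = h) (hgh : g * h = 0) :
    (g + h - h * g) * (g + h - h * g) = g + h - h * g := by
  have hk1 : (g + h) * (g + h) = g + h + h * g := by
    rw [add_mul, mul_add, mul_add, hgg, hgh, hhh]; abel
  have hk2 : (g + h) * (h * g) = h * g := by
    rw [add_mul, ← mul_assoc g h g, hgh, zero_mul, ← mul_assoc h h g, hhh, zero_add]
  have hk3 : (h * g) * (g + h) = h * g := by
    rw [mul_add, mul_assoc h g g, hgg, mul_assoc h g h, hgh, mul_zero, add_zero]
  have hk4 : (h * g) * (h * g) = 0 := by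
    rw [mul_assoc h g (h * g), ← mul_assoc g h g, hgh, zero_mul, mul_zero]
  rw [sub_mul, mul_sub, mul_sub, hk1, hk2, hk3, hk4]
  abel

lemma glue_unit {g h x : A} (hx : g * x = x) : (g + h - h * g) * x = x := by
  rw [sub_mul, add_mul, mul_assoc, hx]
  abel

lemma glue_e {g h e : A} (hhf : h * (e - g * e) = e - g * e) :
    (g + h - h * g) * e = e := by
  have h1 : (g + h - h * g) * e = g * e + (h * e - h * (g * e)) := by
    rw [sub_mul, add_mul, mul_assoc]; abel
  rw [h1, ← mul_sub, hhf]; abel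

/-- Key lemma for the backward direction: there is an idempotent `g` in the socle which
is a left unit for all `1 - p j`. -/
lemma backward_key (hA : IsSemiprimeRing A) :
    ∀ (n : ℕ) (p : Fin n → A), (∀ j, IsIdempotentElem (p j)) →
      (∀ j, IsCoatom (span A {p j})) →
      ∃ g, g ∈ socle A ∧ g * g = g ∧ ∀ j, g * (1 - p j) = 1 - p j := by
  intro n
  induction n with
  | zero => exact fun p _ _ => ⟨0, (socle A).zero_mem, by rw [mul_zero], fun j => j.elim0⟩
  | succ n ih =>
    intro p hidem hco
    obtain ⟨g, hgS, hgg, hge⟩ := ih (fun j => p j.succ) (fun j => hidem j.succ)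
      (fun j => hco j.succ)
    set e := 1 - p 0 with hedef
    have hatom : IsAtom (span A {e}) := atom_span_one_sub (hidem 0) (hco 0)
    have heS : e ∈ socle A := atom_le_socle hatom (mem_span_singleton_self e)
    have hee : e * e = e := (IsIdempotentElem.one_sub (hidem 0))
    set f' := e - g * e with hf'def
    by_cases hf'0 : f' = 0
    · exact ⟨g, hgS, hgg, fun j =>
        Fin.cases ((sub_eq_zero.1 hf'0).symm) (fun i => hge i) j⟩
    · have hP : ∀ a, f' * a ≠ 0 → ∃ z, f' * a * z = f' := by
        intro a ha
        have hea : e * a ≠ 0 := by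
          intro h0
          apply ha
          rw [hf'def, sub_mul, mul_assoc, h0, mul_zero, sub_zero]
        obtain ⟨z, hz⟩ := min_right_div hA hatom hee a hea
        refine ⟨z, ?_⟩
        rw [hf'def, sub_mul, sub_mul]
        rw [show g * e * a * z = g * (e * a * z) by simp only [mul_assoc], hz]
      obtain ⟨a₀, ha₀, hprop⟩ := right_brauer hA hf'0 hP
      set h := f' * a₀ with hhdef
      have hgf' : g * f' = 0 := by
        rw [hf'def, mul_sub, ← mul_assoc, hgg, sub_self]
      have hgh : g * h = 0 := by rw [hhdef, ← mul_assoc, hgf', zero_mul]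
      have hhf' : h * f' = f' := by
        have := hprop 1
        rwa [mul_one] at this
      have hhh : h * h = h := hprop a₀
      have hhS : h ∈ socle A := by
        have h1 : e * a₀ ∈ socle A := socle_mul_mem heS a₀
        have h2 : g * (e * a₀) ∈ socle A := socle_mul_mem hgS (e * a₀)
        have heq : h = e * a₀ - g * (e * a₀) := by
          rw [hhdef, hf'def, sub_mul, mul_assoc]
        rw [heq]
        exact sub_mem h1 h2
      refine ⟨g + h - h * g, ?_, idem_glue hgg hhh hgh, fun j => ?_⟩
      · exact sub_mem (add_mem hgS hhS) (socle_mul_mem hhS g)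
      · refine Fin.cases ?_ (fun i => glue_unit (hge i)) j
        exact glue_e (by rw [← hf'def]; exact hhf')

end BackwardKey

section Forward
variable {A : Type*} [Ring A]

lemma iInf_fin_cons {n : ℕ} (a : Submodule A A) (f : Fin n → Submodule A A) :
    (⨅ j, Fin.cons a f j) = a ⊓ ⨅ j, f j := by
  apply le_antisymm
  · refine le_inf (iInf_le _ 0) (le_iInf fun j => ?_)
    have := iInf_le (Fin.cons a f) j.succ
    simpa using this
  · refine le_iInf fun j => ?_
    refine Fin.cases ?_ (fun i => ?_) j
    · simpa using inf_le_left
    · simpa using inf_le_right.trans (iInf_le _ i)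

/-- Any left ideal `L` with `L ⊔ (finite sup of atoms) = ⊤` is a finite intersection of
coatoms, each of which has an atom complement. -/
lemma exists_coatom_decomp :
    ∀ (m : ℕ) (F : Finset (Submodule A A)), F.card = m →
      (∀ I ∈ F, IsAtom I) → ∀ L : Submodule A A, L ⊔ F.sup id = ⊤ →
      ∃ (n : ℕ) (M : Fin n → Submodule A A),
        (∀ j, IsCoatom (M j) ∧ ∃ I, IsAtom I ∧ M j ⊓ I = ⊥ ∧ M j ⊔ I = ⊤) ∧
        L = ⨅ j, M j := by
  intro m
  induction m with
  | zero =>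
    intro F hcard _ L hsup
    rw [Finset.card_eq_zero] at hcard
    subst hcard
    simp only [Finset.sup_empty] at hsup
    have hL : L = ⊤ := by simpa using hsup
    exact ⟨0, Fin.elim0, fun j => j.elim0, by rw [hL, iInf_of_empty]⟩
  | succ m ih =>
    intro F hcard hatoms L hsup
    classical
    by_cases hL : L = ⊤
    · exact ⟨0, Fin.elim0, fun j => j.elim0, by rw [hL, iInf_of_empty]⟩
    · obtain ⟨Mx, hMx, hLMx⟩ := Ideal.exists_le_maximal (L : Ideal A) hL
      have hMc : IsCoatom Mx := hMx.out
      have hI₀ : ∃ I₀ ∈ F, ¬ I₀ ≤ Mx := by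
        by_contra hcon
        push_neg at hcon
        have h1 : F.sup id ≤ Mx := Finset.sup_le fun I hI => hcon I hI
        have : (⊤ : Submodule A A) ≤ Mx := by
          rw [← hsup]; exact sup_le hLMx h1
        exact hMc.1 (top_le_iff.1 this)
      obtain ⟨I₀, hI₀F, hI₀M⟩ := hI₀
      have hIatom : IsAtom I₀ := hatoms I₀ hI₀F
      have hinf : Mx ⊓ I₀ = ⊥ := by
        apply hIatom.2
        refine lt_of_le_of_ne inf_le_right fun hcon => ?_
        exact hI₀M (hcon ▸ inf_le_left)
      have hsup2 : Mx ⊔ I₀ = ⊤ := by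
        apply hMc.2
        refine lt_of_le_of_ne le_sup_left fun hcon => ?_
        exact hI₀M (le_sup_right.trans hcon.ge)
      -- recurse with L ⊔ I₀ over F.erase I₀
      have hcard' : (F.erase I₀).card = m := by
        rw [Finset.card_erase_of_mem hI₀F, hcard]; rfl
      have hsup' : (L ⊔ I₀) ⊔ (F.erase I₀).sup id = ⊤ := by
        rw [sup_assoc]
        rw [show I₀ ⊔ (F.erase I₀).sup id = F.sup id by
          conv_rhs => rw [← Finset.insert_erase hI₀F]
          rw [Finset.sup_insert]; rfl]
        exact hsup
      obtain ⟨n', M', hprops, hLM'⟩ := ih (F.erase I₀) hcard'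
        (fun I hI => hatoms I (Finset.mem_of_mem_erase hI)) (L ⊔ I₀) hsup'
      refine ⟨n' + 1, Fin.cons Mx M', fun j => ?_, ?_⟩
      · refine Fin.cases ?_ (fun i => ?_) j
        · exact ⟨hMc, I₀, hIatom, hinf, hsup2⟩
        · simpa using hprops i
      · rw [iInf_fin_cons, ← hLM', inf_comm, sup_inf_assoc_of_le I₀ hLMx,
          inf_comm I₀ Mx, hinf, sup_bot_eq]

end Forward

/-- A maximal left ideal with an atom complement is generated by an idempotent. -/
lemma coatom_idem {A : Type*} [Ring A] (hA : IsSemiprimeRing A) {M I : Submodule A A}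
    (hM : IsCoatom M) (hI : IsAtom I) (hinf : M ⊓ I = ⊥) (hsup : M ⊔ I = ⊤) :
    ∃ q : A, IsIdempotentElem q ∧ Submodule.span A {q} = M := by
  have h1 : (1 : A) ∈ M ⊔ I := by rw [hsup]; trivial
  obtain ⟨m₀, hm₀, t, htI, hmt⟩ := Submodule.mem_sup.1 h1
  have ht0 : t ≠ 0 := by
    rintro rfl
    rw [add_zero] at hmt
    apply hM.1
    rw [eq_top_iff]
    intro x _
    have : x * m₀ ∈ M := by simpa [smul_eq_mul] using M.smul_mem x hm₀
    rwa [hmt, mul_one] at this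
  have hMt : ∀ x ∈ M, x * t = 0 := by
    intro x hx
    have hxtI : x * t ∈ I := by simpa [smul_eq_mul] using I.smul_mem x htI
    have hxtM : x * t ∈ M := by
      have hxm : x * m₀ ∈ M := by simpa [smul_eq_mul] using M.smul_mem x hm₀
      have : x * t = x - x * m₀ := by
        rw [eq_sub_iff_add_eq, ← mul_add, add_comm t m₀, hmt, mul_one]
      rw [this]
      exact sub_mem hx hxm
    have : x * t ∈ M ⊓ I := ⟨hxtM, hxtI⟩
    rw [hinf] at this
    simpa using this
  -- span{t} = I
  have hspan : Submodule.span A {t} = I := by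
    have hle : Submodule.span A {t} ≤ I := by rwa [Submodule.span_le, Set.singleton_subset_iff]
    rcases eq_or_lt_of_le hle with h | h
    · exact h
    · exact absurd (Submodule.span_singleton_eq_bot.1 (hI.2 _ h)) ht0
  obtain ⟨e, heI, he0, hxe⟩ := left_brauer hA hI
  have hte : t * e = t := hxe t htI
  obtain ⟨c, hc⟩ := Submodule.mem_span_singleton.1 (hspan ▸ heI)
  rw [smul_eq_mul] at hc
  -- f = t * c is a nonzero idempotent
  have hff : (t * c) * (t * c) = t * c := by
    rw [mul_assoc t c (t * c), ← mul_assoc c t c, hc, ← mul_assoc, hte]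
  have hf0 : t * c ≠ 0 := by
    intro h0
    have hee : e * e = e := hxe e heI
    have : e * e = 0 := by
      rw [← hc, mul_assoc c t (c * t), ← mul_assoc t c t, h0, zero_mul, mul_zero]
    rw [hee] at this
    exact he0 this
  -- q = 1 - t*c
  refine ⟨1 - t * c, IsIdempotentElem.one_sub hff, ?_⟩
  have hlann : lAnn {t} = M := by
    have hle : M ≤ lAnn {t} := by
      intro x hx s hs
      rw [Set.mem_singleton_iff] at hs
      rw [hs]
      exact hMt x hx
    rcases eq_or_lt_of_le hle with h | h
    · exact h.symm
    · exfalso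
      have := hM.2 _ h
      have h1t : (1 : A) ∈ lAnn {t} := by rw [this]; trivial
      have := h1t t rfl
      rw [one_mul] at this
      exact ht0 this
  have hqM : 1 - t * c ∈ M := by
    rw [← hlann]
    intro s hs
    rw [Set.mem_singleton_iff] at hs
    rw [hs]
    rw [sub_mul, one_mul, mul_assoc t c t, hc, hte, sub_self]
  apply le_antisymm
  · rwa [Submodule.span_le, Set.singleton_subset_iff]
  · intro x hx
    have hxt : x * t = 0 := hMt x hx
    have hxf : x * (t * c) = 0 := by rw [← mul_assoc, hxt, zero_mul]
    refine Submodule.mem_span_singleton.2 ⟨x, ?_⟩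
    rw [smul_eq_mul, mul_sub, mul_one, hxf, sub_zero]

theorem stmt6 (A : Type*) [Ring A] (hA : IsSemiprimeRing A) (L : Submodule A A) :
    IsFredholmLeftIdeal L ↔
      ∃ n : ℕ, ∃ p : Fin n → A, (∀ j, IsIdempotentElem (p j)) ∧
        (∀ j, IsCoatom (Submodule.span A {p j})) ∧ L = ⨅ j, Submodule.span A {p j} := by
  constructor
  · rintro ⟨a, haL, b, hab, hba⟩
    have hsup : L ⊔ socle A = ⊤ := by
      rw [eq_top_iff]
      intro x _
      have hx : x = x * b * a - x * (b * a - 1) := by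
        rw [mul_sub, mul_one, ← mul_assoc]; abel
      rw [hx]
      refine sub_mem (Submodule.mem_sup_left ?_) (Submodule.mem_sup_right ?_)
      · simpa [smul_eq_mul, mul_assoc] using L.smul_mem (x * b) haL
      · simpa [smul_eq_mul] using (socle A).smul_mem x hba
    have h1 : (1 : A) ∈ L ⊔ socle A := by rw [hsup]; trivial
    obtain ⟨a₁, ha₁, s, hsS, hadd⟩ := Submodule.mem_sup.1 h1
    obtain ⟨F, hFsub, hsF⟩ := Submodule.mem_sSup_iff_exists_finset.1 hsS
    have hsF' : s ∈ F.sup id := by rw [Finset.sup_eq_iSup]; simpa using hsF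
    have hLF : L ⊔ F.sup id = ⊤ := by
      rw [eq_top_iff]; intro x _
      have hx : x = x * a₁ + x * s := by rw [← mul_add, hadd, mul_one]
      rw [hx]
      exact add_mem (Submodule.mem_sup_left (by simpa [smul_eq_mul] using L.smul_mem x ha₁))
        (Submodule.mem_sup_right (by simpa [smul_eq_mul] using (F.sup id).smul_mem x hsF'))
    obtain ⟨n, M, hprops, hLM⟩ := exists_coatom_decomp F.card F rfl (fun I hI => hFsub hI) L hLF
    have hq : ∀ j, ∃ q : A, IsIdempotentElem q ∧ Submodule.span A {q} = M j := by
      intro j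
      obtain ⟨hco, I, hIa, hi, hs⟩ := hprops j
      exact coatom_idem hA hco hIa hi hs
    choose q hq1 hq2 using hq
    refine ⟨n, q, hq1, fun j => ?_, ?_⟩
    · rw [hq2 j]; exact (hprops j).1
    · rw [hLM]; exact iInf_congr fun j => (hq2 j).symm
  · rintro ⟨n, p, hidem, hco, hL⟩
    obtain ⟨g, hgS, hgg, hge⟩ := backward_key hA n p hidem hco
    refine ⟨1 - g, ?_, 1, ?_, ?_⟩
    · rw [hL, Submodule.mem_iInf]
      intro j
      have h0 : (1 - g) * (1 - p j) = 0 := by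
        rw [sub_mul, one_mul, hge j, sub_self]
      rw [mul_sub, mul_one] at h0
      have heq : (1 - g) * p j = 1 - g := (sub_eq_zero.1 h0).symm
      exact Submodule.mem_span_singleton.2 ⟨1 - g, by rw [smul_eq_mul, heq]⟩
    · have h2 : (1 - g) * 1 - 1 = -g := by rw [mul_one]; abel
      rw [h2]; exact neg_mem hgS
    · have h2 : (1 : A) * (1 - g) - 1 = -g := by rw [one_mul]; abel
      rw [h2]; exact neg_mem hgS
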